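/- Let a, b, c be rational numbers with a·b ≠ 0 satisfying a³ − b³ − ab(1−c) = 0 and a³ + ab + 2b³ = 0. Suppose in addition that at least one of the following holds: (i) c = ab; (ii) a + b² = 0; (iii) a³ − b³c + ab(c²−1) = 0; or (iv) f₁ = 0, where f₁ = a³ + 4a⁶ + 3a⁵b² + a³b³ − c − 4a³c + 6a⁴bc − 6a²b²c − b³c − 3a²b⁵c − 3a³c² − 3abc² − 4b³c² − a³b³c² − 6ab⁴c² − 4b⁶c² + 3c³ + 4a³c³ + 6a²b²c³ + 3b³c³ + a³c⁴ + 3abc⁴ + 4b³c⁴ − 3c⁵ − b³c⁵ + c⁷. Then (a,b,c) = (−1, 1, −1) or (a,b,c) = (−1/3, −1/3, 1). -/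

import Mathlib

lemma divisor27pos (d : ℤ) (h1 : 0 < d) (h3 : d ∣ 27) : d = 1 ∨ d = 3 ∨ d = 9 ∨ d = 27 := by
  have h2 := Int.le_of_dvd (by norm_num) h3
  interval_cases d <;> omega

lemma divisor27 (n : ℤ) (h3 : n ∣ 27) :
    n = 1 ∨ n = -1 ∨ n = 3 ∨ n = -3 ∨ n = 9 ∨ n = -9 ∨ n = 27 ∨ n = -27 ∨ n = 0 := by
  have h0 : n ≠ 0 := by rintro rfl; norm_num at h3
  rcases h0.lt_or_gt with h | h
  · have := divisor27pos (-n) (by linarith) h3.neg_left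
    omega
  · have := divisor27pos n h h3
    omega

/-- The quartic 27s⁴+17s³-52s²+17s+27 has no rational root. -/
lemma noRatRoot (r : ℚ) : 27*r^4 + 17*r^3 - 52*r^2 + 17*r + 27 ≠ 0 := by
  intro h
  obtain ⟨n, hn⟩ : ∃ n : ℤ, n = r.num := ⟨_, rfl⟩
  obtain ⟨d, hd⟩ : ∃ d : ℤ, d = (r.den : ℤ) := ⟨_, rfl⟩
  have hd0 : 0 < d := by rw [hd]; exact_mod_cast r.pos
  have hdne : (d:ℚ) ≠ 0 := by positivity
  have hr : (r : ℚ) = (n:ℚ) / (d:ℚ) := by rw [hn, hd]; exact_mod_cast (Rat.num_div_den r).symm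
  have hnd : (n:ℚ) = r * d := by rw [hr]; field_simp
  have key : 27*n^4 + 17*n^3*d - 52*n^2*d^2 + 17*n*d^3 + 27*d^4 = 0 := by
    have h2 : (27*(n:ℚ)^4 + 17*n^3*d - 52*n^2*d^2 + 17*n*d^3 + 27*d^4 : ℚ)
        = (27*r^4 + 17*r^3 - 52*r^2 + 17*r + 27) * (d:ℚ)^4 := by rw [hnd]; ring
    rw [h, zero_mul] at h2
    exact_mod_cast h2
  have hco : IsCoprime n d := by
    rw [hn, hd, Int.isCoprime_iff_gcd_eq_one]
    simpa [Int.gcd] using r.reduced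
  have hdvd1 : d ∣ 27 * n^4 := ⟨-(17*n^3 - 52*n^2*d + 17*n*d^2 + 27*d^3), by linarith [key]⟩
  have hdvd2 : n ∣ 27 * d^4 := ⟨-(17*d^3 - 52*d^2*n + 17*d*n^2 + 27*n^3), by linarith [key]⟩
  have hd27 : d ∣ 27 := (IsCoprime.pow_right hco.symm).dvd_of_dvd_mul_right hdvd1
  have hn27 : n ∣ 27 := (IsCoprime.pow_right hco).dvd_of_dvd_mul_right hdvd2
  have hdcases := divisor27pos d hd0 hd27
  have hncases := divisor27 n hn27
  rcases hdcases with rfl | rfl | rfl | rfl <;>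
    rcases hncases with rfl | rfl | rfl | rfl | rfl | rfl | rfl | rfl | rfl <;>
    norm_num at key

set_option maxHeartbeats 4000000 in
theorem stmt_8 (a b c : ℚ) (hab : a * b ≠ 0)
    (con1 : a ^ 3 - b ^ 3 - a * b * (1 - c) = 0)
    (con2 : a ^ 3 + a * b + 2 * b ^ 3 = 0)
    (hextra :
      c = a * b ∨
      a + b ^ 2 = 0 ∨
      a ^ 3 - b ^ 3 * c + a * b * (c ^ 2 - 1) = 0 ∨
      a ^ 3 + 4 * a ^ 6 + 3 * a ^ 5 * b ^ 2 + a ^ 3 * b ^ 3 - c - 4 * a ^ 3 * c +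
        6 * a ^ 4 * b * c - 6 * a ^ 2 * b ^ 2 * c - b ^ 3 * c - 3 * a ^ 2 * b ^ 5 * c -
        3 * a ^ 3 * c ^ 2 - 3 * a * b * c ^ 2 - 4 * b ^ 3 * c ^ 2 -
        a ^ 3 * b ^ 3 * c ^ 2 - 6 * a * b ^ 4 * c ^ 2 - 4 * b ^ 6 * c ^ 2 +
        3 * c ^ 3 + 4 * a ^ 3 * c ^ 3 + 6 * a ^ 2 * b ^ 2 * c ^ 3 + 3 * b ^ 3 * c ^ 3 +
        a ^ 3 * c ^ 4 + 3 * a * b * c ^ 4 + 4 * b ^ 3 * c ^ 4 - 3 * c ^ 5 -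
        b ^ 3 * c ^ 5 + c ^ 7 = 0) :
    (a, b, c) = (-1, 1, -1) ∨ (a, b, c) = (-1/3, -1/3, 1) := by
  have ha : a ≠ 0 := fun h => hab (by rw [h]; ring)
  have hb : b ≠ 0 := fun h => hab (by rw [h]; ring)
  have hac : a * c = 2*a + 3*b^2 := by
    have h : b * (a*c - (2*a + 3*b^2)) = 0 := by linear_combination con1 - con2
    have := (mul_eq_zero.mp h).resolve_left hb
    linarith
  obtain ⟨t, ht⟩ : ∃ t : ℚ, t = a / b := ⟨_, rfl⟩
  have ht0 : t ≠ 0 := by rw [ht]; exact div_ne_zero ha hb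
  have hat : a = t * b := by rw [ht]; field_simp
  have hP : b * (t^3 + 2) = -t := by
    rw [ht]; field_simp; linear_combination con2
  have hC : c * t = 2*t + 3*b := by
    have h5 : b * (c * t) = b * (2*t + 3*b) := by
      linear_combination hac + (2 - c) * hat
    exact mul_left_cancel₀ hb h5
  have finL : a = -b → (a, b, c) = (-1, 1, -1) ∨ (a, b, c) = (-1/3, -1/3, 1) := by
    intro he
    left
    have hb1 : b = 1 := by
      have h : b^2 * (b - 1) = 0 := by linear_combination con2 - (a^2 - a*b + b^2 + b) * he
      have := (mul_eq_zero.mp h).resolve_left (pow_ne_zero 2 hb)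
      linarith
    have ha1 : a = -1 := by rw [he, hb1]
    have hc1 : c = -1 := by
      have hh := hac
      rw [ha1, hb1] at hh
      linarith
    rw [ha1, hb1, hc1]
  have finR : a = b → (a, b, c) = (-1, 1, -1) ∨ (a, b, c) = (-1/3, -1/3, 1) := by
    intro he
    right
    have hb1 : b = -1/3 := by
      have h : b^2 * (3*b + 1) = 0 := by linear_combination con2 - (a^2 + a*b + b^2 + b) * he
      have := (mul_eq_zero.mp h).resolve_left (pow_ne_zero 2 hb)
      linarith
    have ha1 : a = -1/3 := by rw [he, hb1]
    have hc1 : c = 1 := by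
      have hh := hac
      rw [ha1, hb1] at hh
      linarith
    rw [ha1, hb1, hc1]
  have finT1 : t^3 - 1 = 0 → (a, b, c) = (-1, 1, -1) ∨ (a, b, c) = (-1/3, -1/3, 1) := by
    intro h
    have h1 : (t - 1) * (t^2 + t + 1) = 0 := by linear_combination h
    have h2 : t^2 + t + 1 ≠ 0 := by nlinarith [sq_nonneg (2*t+1)]
    have h3 : t = 1 := by
      have := (mul_eq_zero.mp h1).resolve_right h2; linarith
    exact finR (by rw [hat, h3, one_mul])
  have finT2 : t^3 + 1 = 0 → (a, b, c) = (-1, 1, -1) ∨ (a, b, c) = (-1/3, -1/3, 1) := by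
    intro h
    have h1 : (t + 1) * (t^2 - t + 1) = 0 := by linear_combination h
    have h2 : t^2 - t + 1 ≠ 0 := by nlinarith [sq_nonneg (2*t-1)]
    have h3 : t = -1 := by
      have := (mul_eq_zero.mp h1).resolve_right h2; linarith
    exact finL (by rw [hat, h3]; ring)
  rcases hextra with hcase | hcase | hcase | hcase
  · -- case i : c = a*b
    have hcase' : c - a * b = 0 := by linear_combination hcase
    have h : t * (t^3 + 1)^2 = 0 := by
      linear_combination (1/2) * ((t^1*(t^3+2)^2) * hcase' - (-1*b*t^7 - 4*b*t^4 - 4*b*t) * hat - (1*t^6 + 4*t^3 + 4) * hC - (-1*b*t^5 - 2*b*t^2 + 4*t^3 + 6) * hP)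
    exact finT2 (pow_eq_zero_iff (two_ne_zero) |>.mp ((mul_eq_zero.mp h).resolve_left ht0))
  · -- case ii : a + b^2 = 0
    have h : t^2 * (t^3 + 1) = 0 := by
      linear_combination (-1 : ℚ) * ((t^0*(t^3+2)^2) * hcase - (1*t^6 + 4*t^3 + 4) * hat - (0) * hC - (1*b*t^3 + 2*b + 1*t^4 + 1*t) * hP)
    exact finT2 ((mul_eq_zero.mp h).resolve_left (pow_ne_zero 2 ht0))
  · -- case iii
    have h : t^5 * ((t^3 - 1) * (t^3 + 1)) = 0 := by
      linear_combination (1/2) * ((t^2*(t^3+2)^4) * hcase - (1*a^2*t^14 + 8*a^2*t^11 + 24*a^2*t^8 + 32*a^2*t^5 + 16*a^2*t^2 + 1*a*b*t^15 + 8*a*b*t^12 + 24*a*b*t^9 + 32*a*b*t^6 + 16*a*b*t^3 + 1*b^2*t^16 + 8*b^2*t^13 + 24*b^2*t^10 + 32*b^2*t^7 + 16*b^2*t^4 + 1*b*c^2*t^14 + 8*b*c^2*t^11 + 24*b*c^2*t^8 + 32*b*c^2*t^5 + 16*b*c^2*t^2 - 1*b*t^14 - 8*b*t^11 - 24*b*t^8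 - 32*b*t^5 - 16*b*t^2) * hat - (2*b^3*t^13 + 16*b^3*t^10 + 48*b^3*t^7 + 64*b^3*t^4 + 32*b^3*t + 1*b^2*c*t^14 + 8*b^2*c*t^11 + 24*b^2*c*t^8 + 32*b^2*c*t^5 + 16*b^2*c*t^2 + 2*b^2*t^14 + 16*b^2*t^11 + 48*b^2*t^8 + 64*b^2*t^5 + 32*b^2*t^2) * hC - (6*b^3*t^10 + 36*b^3*t^7 + 72*b^3*t^4 + 48*b^3*t + 1*b^2*t^14 + 16*b^2*t^11 + 66*b^2*t^8 + 104*b^2*t^5 + 56*b^2*t^2 + 2*b*t^12 + 4*b*t^9 - 2*b*t^6 - 4*b*t^3 - 2*t^10 + 2*t^4) * hP)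
    rcases mul_eq_zero.mp ((mul_eq_zero.mp h).resolve_left (pow_ne_zero 5 ht0)) with h | h
    · exact finT1 h
    · exact finT2 h
  · -- case iv
    have h : t^7 * ((t^3 - 1) * (t^3 + 1)^3 *
        (27*(t^3)^4 + 17*(t^3)^3 - 52*(t^3)^2 + 17*(t^3) + 27)) = 0 := by
      linear_combination (1/2) * ((t^7*(t^3+2)^8) * hcase - (4*a^5*t^31 + 64*a^5*t^28 + 448*a^5*t^25 + 1792*a^5*t^22 + 4480*a^5*t^19 + 7168*a^5*t^16 + 7168*a^5*t^13 + 4096*a^5*t^10 + 1024*a^5*t^7 + 3*a^4*b^2*t^31 + 48*a^4*b^2*t^28 + 336*a^4*b^2*t^25 + 1344*a^4*b^2*t^22 + 3360*a^4*b^2*t^19 + 5376*a^4*b^2*t^16 + 5376*a^4*b^2*t^13 + 3072*a^4*b^2*t^10 + 768*a^4*b^2*t^7 + 4*a^4*b*t^32 + 64*a^4*b*t^29 + 448*a^4*b*t^26 + 1792*a^4*b*t^23 + 4480*a^4*b*t^20 + 7168*a^4*b*t^17 + 7168*a^4*b*t^14 + 4096*a^4*b*t^11 + 1024*a^4*b*t^8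 + 3*a^3*b^3*t^32 + 48*a^3*b^3*t^29 + 336*a^3*b^3*t^26 + 1344*a^3*b^3*t^23 + 3360*a^3*b^3*t^20 + 5376*a^3*b^3*t^17 + 5376*a^3*b^3*t^14 + 3072*a^3*b^3*t^11 + 768*a^3*b^3*t^8 + 4*a^3*b^2*t^33 + 64*a^3*b^2*t^30 + 448*a^3*b^2*t^27 + 1792*a^3*b^2*t^24 + 4480*a^3*b^2*t^21 + 7168*a^3*b^2*t^18 + 7168*a^3*b^2*t^15 + 4096*a^3*b^2*t^12 + 1024*a^3*b^2*t^9 + 6*a^3*b*c*t^31 + 96*a^3*b*c*t^28 + 672*a^3*b*c*t^25 + 2688*a^3*b*c*t^22 + 6720*a^3*b*c*t^19 + 10752*a^3*b*c*t^16 + 10752*a^3*b*c*t^13 + 6144*a^3*b*c*t^10 + 1536*a^3*b*c*t^7 + 3*a^2*b^4*t^33 + 48*a^2*b^4*t^30 + 336*a^2*b^4*t^27 + 1344*a^2*b^4*t^24 + 3360*a^2*b^4*t^21 + 5376*a^2*b^4*t^18 + 5376*a^2*b^4*t^15 + 3072*a^2*b^4*t^12 + 768*a^2*b^4*t^9 -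 1*a^2*b^3*c^2*t^31 - 16*a^2*b^3*c^2*t^28 - 112*a^2*b^3*c^2*t^25 - 448*a^2*b^3*c^2*t^22 - 1120*a^2*b^3*c^2*t^19 - 1792*a^2*b^3*c^2*t^16 - 1792*a^2*b^3*c^2*t^13 - 1024*a^2*b^3*c^2*t^10 - 256*a^2*b^3*c^2*t^7 + 4*a^2*b^3*t^34 + 65*a^2*b^3*t^31 + 464*a^2*b^3*t^28 + 1904*a^2*b^3*t^25 + 4928*a^2*b^3*t^22 + 8288*a^2*b^3*t^19 + 8960*a^2*b^3*t^16 + 5888*a^2*b^3*t^13 + 2048*a^2*b^3*t^10 + 256*a^2*b^3*t^7 + 6*a^2*b^2*c*t^32 + 96*a^2*b^2*c*t^29 + 672*a^2*b^2*c*t^26 + 2688*a^2*b^2*c*t^23 + 6720*a^2*b^2*c*t^20 + 10752*a^2*b^2*c*t^17 + 10752*a^2*b^2*c*t^14 + 6144*a^2*b^2*c*t^11 + 1536*a^2*b^2*c*t^8 + 1*a^2*c^4*t^31 + 16*a^2*c^4*t^28 + 112*a^2*c^4*t^25 + 448*a^2*c^4*t^22 + 1120*a^2*c^4*t^19 + 1792*a^2*c^4*t^16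 + 1792*a^2*c^4*t^13 + 1024*a^2*c^4*t^10 + 256*a^2*c^4*t^7 + 4*a^2*c^3*t^31 + 64*a^2*c^3*t^28 + 448*a^2*c^3*t^25 + 1792*a^2*c^3*t^22 + 4480*a^2*c^3*t^19 + 7168*a^2*c^3*t^16 + 7168*a^2*c^3*t^13 + 4096*a^2*c^3*t^10 + 1024*a^2*c^3*t^7 - 3*a^2*c^2*t^31 - 48*a^2*c^2*t^28 - 336*a^2*c^2*t^25 - 1344*a^2*c^2*t^22 - 3360*a^2*c^2*t^19 - 5376*a^2*c^2*t^16 - 5376*a^2*c^2*t^13 - 3072*a^2*c^2*t^10 - 768*a^2*c^2*t^7 - 4*a^2*c*t^31 - 64*a^2*c*t^28 - 448*a^2*c*t^25 - 1792*a^2*c*t^22 - 4480*a^2*c*t^19 - 7168*a^2*c*t^16 - 7168*a^2*c*t^13 - 4096*a^2*c*t^10 - 1024*a^2*c*t^7 + 1*a^2*t^31 + 16*a^2*t^28 + 112*a^2*t^25 + 448*a^2*t^22 + 1120*a^2*t^19 + 1792*a^2*t^16 + 1792*a^2*t^13 + 1024*a^2*t^10 + 256*a^2*t^7 - 3*a*b^5*c*t^31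 - 48*a*b^5*c*t^28 - 336*a*b^5*c*t^25 - 1344*a*b^5*c*t^22 - 3360*a*b^5*c*t^19 - 5376*a*b^5*c*t^16 - 5376*a*b^5*c*t^13 - 3072*a*b^5*c*t^10 - 768*a*b^5*c*t^7 + 3*a*b^5*t^34 + 48*a*b^5*t^31 + 336*a*b^5*t^28 + 1344*a*b^5*t^25 + 3360*a*b^5*t^22 + 5376*a*b^5*t^19 + 5376*a*b^5*t^16 + 3072*a*b^5*t^13 + 768*a*b^5*t^10 - 1*a*b^4*c^2*t^32 - 16*a*b^4*c^2*t^29 - 112*a*b^4*c^2*t^26 - 448*a*b^4*c^2*t^23 - 1120*a*b^4*c^2*t^20 - 1792*a*b^4*c^2*t^17 - 1792*a*b^4*c^2*t^14 - 1024*a*b^4*c^2*t^11 - 256*a*b^4*c^2*t^8 + 4*a*b^4*t^35 + 65*a*b^4*t^32 + 464*a*b^4*t^29 + 1904*a*b^4*t^26 + 4928*a*b^4*t^23 + 8288*a*b^4*t^20 + 8960*a*b^4*t^17 + 5888*a*b^4*t^14 + 2048*a*b^4*t^11 + 256*a*b^4*t^8 + 6*a*b^3*c*t^33 + 96*a*b^3*c*t^30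 + 672*a*b^3*c*t^27 + 2688*a*b^3*c*t^24 + 6720*a*b^3*c*t^21 + 10752*a*b^3*c*t^18 + 10752*a*b^3*c*t^15 + 6144*a*b^3*c*t^12 + 1536*a*b^3*c*t^9 + 6*a*b^2*c^3*t^31 + 96*a*b^2*c^3*t^28 + 672*a*b^2*c^3*t^25 + 2688*a*b^2*c^3*t^22 + 6720*a*b^2*c^3*t^19 + 10752*a*b^2*c^3*t^16 + 10752*a*b^2*c^3*t^13 + 6144*a*b^2*c^3*t^10 + 1536*a*b^2*c^3*t^7 - 6*a*b^2*c*t^31 - 96*a*b^2*c*t^28 - 672*a*b^2*c*t^25 - 2688*a*b^2*c*t^22 - 6720*a*b^2*c*t^19 - 10752*a*b^2*c*t^16 - 10752*a*b^2*c*t^13 - 6144*a*b^2*c*t^10 - 1536*a*b^2*c*t^7 + 1*a*b*c^4*t^32 + 16*a*b*c^4*t^29 + 112*a*b*c^4*t^26 + 448*a*b*c^4*t^23 + 1120*a*b*c^4*t^20 + 1792*a*b*c^4*t^17 + 1792*a*b*c^4*t^14 + 1024*a*b*c^4*t^11 + 256*a*b*c^4*t^8 + 4*a*b*c^3*t^32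 + 64*a*b*c^3*t^29 + 448*a*b*c^3*t^26 + 1792*a*b*c^3*t^23 + 4480*a*b*c^3*t^20 + 7168*a*b*c^3*t^17 + 7168*a*b*c^3*t^14 + 4096*a*b*c^3*t^11 + 1024*a*b*c^3*t^8 - 3*a*b*c^2*t^32 - 48*a*b*c^2*t^29 - 336*a*b*c^2*t^26 - 1344*a*b*c^2*t^23 - 3360*a*b*c^2*t^20 - 5376*a*b*c^2*t^17 - 5376*a*b*c^2*t^14 - 3072*a*b*c^2*t^11 - 768*a*b*c^2*t^8 - 4*a*b*c*t^32 - 64*a*b*c*t^29 - 448*a*b*c*t^26 - 1792*a*b*c*t^23 - 4480*a*b*c*t^20 - 7168*a*b*c*t^17 - 7168*a*b*c*t^14 - 4096*a*b*c*t^11 - 1024*a*b*c*t^8 + 1*a*b*t^32 + 16*a*b*t^29 + 112*a*b*t^26 + 448*a*b*t^23 + 1120*a*b*t^20 + 1792*a*b*t^17 + 1792*a*b*t^14 + 1024*a*b*t^11 + 256*a*b*t^8 - 3*b^6*c*t^32 - 48*b^6*c*t^29 - 336*b^6*c*t^26 - 1344*b^6*c*t^23 - 3360*b^6*c*t^20 -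 5376*b^6*c*t^17 - 5376*b^6*c*t^14 - 3072*b^6*c*t^11 - 768*b^6*c*t^8 + 3*b^6*t^35 + 48*b^6*t^32 + 336*b^6*t^29 + 1344*b^6*t^26 + 3360*b^6*t^23 + 5376*b^6*t^20 + 5376*b^6*t^17 + 3072*b^6*t^14 + 768*b^6*t^11 - 1*b^5*c^2*t^33 - 16*b^5*c^2*t^30 - 112*b^5*c^2*t^27 - 448*b^5*c^2*t^24 - 1120*b^5*c^2*t^21 - 1792*b^5*c^2*t^18 - 1792*b^5*c^2*t^15 - 1024*b^5*c^2*t^12 - 256*b^5*c^2*t^9 + 4*b^5*t^36 + 65*b^5*t^33 + 464*b^5*t^30 + 1904*b^5*t^27 + 4928*b^5*t^24 + 8288*b^5*t^21 + 8960*b^5*t^18 + 5888*b^5*t^15 + 2048*b^5*t^12 + 256*b^5*t^9 - 6*b^4*c^2*t^31 - 96*b^4*c^2*t^28 - 672*b^4*c^2*t^25 - 2688*b^4*c^2*t^22 - 6720*b^4*c^2*t^19 - 10752*b^4*c^2*t^16 - 10752*b^4*c^2*t^13 - 6144*b^4*c^2*t^10 - 1536*b^4*c^2*t^7 + 6*b^4*c*t^34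 + 96*b^4*c*t^31 + 672*b^4*c*t^28 + 2688*b^4*c*t^25 + 6720*b^4*c*t^22 + 10752*b^4*c*t^19 + 10752*b^4*c*t^16 + 6144*b^4*c*t^13 + 1536*b^4*c*t^10 + 6*b^3*c^3*t^32 + 96*b^3*c^3*t^29 + 672*b^3*c^3*t^26 + 2688*b^3*c^3*t^23 + 6720*b^3*c^3*t^20 + 10752*b^3*c^3*t^17 + 10752*b^3*c^3*t^14 + 6144*b^3*c^3*t^11 + 1536*b^3*c^3*t^8 - 6*b^3*c*t^32 - 96*b^3*c*t^29 - 672*b^3*c*t^26 - 2688*b^3*c*t^23 - 6720*b^3*c*t^20 - 10752*b^3*c*t^17 - 10752*b^3*c*t^14 - 6144*b^3*c*t^11 - 1536*b^3*c*t^8 + 1*b^2*c^4*t^33 + 16*b^2*c^4*t^30 + 112*b^2*c^4*t^27 + 448*b^2*c^4*t^24 + 1120*b^2*c^4*t^21 + 1792*b^2*c^4*t^18 + 1792*b^2*c^4*t^15 + 1024*b^2*c^4*t^12 + 256*b^2*c^4*t^9 + 4*b^2*c^3*t^33 + 64*b^2*c^3*t^30 + 448*b^2*c^3*t^27 + 1792*b^2*c^3*t^24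 + 4480*b^2*c^3*t^21 + 7168*b^2*c^3*t^18 + 7168*b^2*c^3*t^15 + 4096*b^2*c^3*t^12 + 1024*b^2*c^3*t^9 - 3*b^2*c^2*t^33 - 48*b^2*c^2*t^30 - 336*b^2*c^2*t^27 - 1344*b^2*c^2*t^24 - 3360*b^2*c^2*t^21 - 5376*b^2*c^2*t^18 - 5376*b^2*c^2*t^15 - 3072*b^2*c^2*t^12 - 768*b^2*c^2*t^9 - 4*b^2*c*t^33 - 64*b^2*c*t^30 - 448*b^2*c*t^27 - 1792*b^2*c*t^24 - 4480*b^2*c*t^21 - 7168*b^2*c*t^18 - 7168*b^2*c*t^15 - 4096*b^2*c*t^12 - 1024*b^2*c*t^9 + 1*b^2*t^33 + 16*b^2*t^30 + 112*b^2*t^27 + 448*b^2*t^24 + 1120*b^2*t^21 + 1792*b^2*t^18 + 1792*b^2*t^15 + 1024*b^2*t^12 + 256*b^2*t^9 + 3*b*c^4*t^31 + 48*b*c^4*t^28 + 336*b*c^4*t^25 + 1344*b*c^4*t^22 + 3360*b*c^4*t^19 + 5376*b*c^4*t^16 + 5376*b*c^4*t^13 + 3072*b*c^4*t^10 + 768*b*c^4*t^7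 - 3*b*c^2*t^31 - 48*b*c^2*t^28 - 336*b*c^2*t^25 - 1344*b*c^2*t^22 - 3360*b*c^2*t^19 - 5376*b*c^2*t^16 - 5376*b*c^2*t^13 - 3072*b*c^2*t^10 - 768*b*c^2*t^7) * hat - (-6*b^7*t^32 - 108*b^7*t^29 - 945*b^7*t^26 - 5328*b^7*t^23 - 21168*b^7*t^20 - 60480*b^7*t^17 - 122976*b^7*t^14 - 172800*b^7*t^11 - 158976*b^7*t^8 - 86016*b^7*t^5 - 20736*b^7*t^2 - 1*b^6*c*t^33 - 20*b^6*c*t^30 - 203*b^6*c*t^27 - 1328*b^6*c*t^24 - 5936*b^6*c*t^21 - 18368*b^6*c*t^18 - 39200*b^6*c*t^15 - 56576*b^6*c*t^12 - 52736*b^6*c*t^9 - 28672*b^6*c*t^6 - 6912*b^6*c*t^3 - 2*b^6*t^33 + 23*b^6*t^30 + 548*b^6*t^27 + 4265*b^6*t^24 + 21968*b^6*t^21 + 91280*b^6*t^18 + 300608*b^6*t^15 + 719456*b^6*t^12 + 1168640*b^6*t^9 + 1209856*b^6*t^6 + 718848*b^6*t^3 + 186624*b^6 - 9*b^5*c^2*t^28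 - 144*b^5*c^2*t^25 - 1008*b^5*c^2*t^22 - 4032*b^5*c^2*t^19 - 10080*b^5*c^2*t^16 - 16128*b^5*c^2*t^13 - 16128*b^5*c^2*t^10 - 9216*b^5*c^2*t^7 - 2304*b^5*c^2*t^4 + 21*b^5*c*t^31 + 318*b^5*c*t^28 + 2307*b^5*c*t^25 + 11280*b^5*c*t^22 + 42672*b^5*c*t^19 + 126336*b^5*c*t^16 + 277536*b^5*c*t^13 + 424704*b^5*c*t^10 + 422400*b^5*c*t^7 + 244224*b^5*c*t^4 + 62208*b^5*c*t + 6*b^5*t^34 + 246*b^5*t^31 + 3180*b^5*t^28 + 24132*b^5*t^25 + 132672*b^5*t^22 + 553728*b^5*t^19 + 1706880*b^5*t^16 + 3734400*b^5*t^13 + 5574144*b^5*t^10 + 5374464*b^5*t^7 + 3013632*b^5*t^4 + 746496*b^5*t - 3*b^4*c^3*t^29 - 48*b^4*c^3*t^26 - 336*b^4*c^3*t^23 - 1344*b^4*c^3*t^20 - 3360*b^4*c^3*t^17 - 5376*b^4*c^3*t^14 - 5376*b^4*c^3*t^11 - 3072*b^4*c^3*t^8 - 768*b^4*c^3*t^5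 + 9*b^4*c^2*t^32 + 144*b^4*c^2*t^29 + 1089*b^4*c^2*t^26 + 5328*b^4*c^2*t^23 + 19152*b^4*c^2*t^20 + 52416*b^4*c^2*t^17 + 106848*b^4*c^2*t^14 + 154368*b^4*c^2*t^11 + 147456*b^4*c^2*t^8 + 82944*b^4*c^2*t^5 + 20736*b^4*c^2*t^2 + 36*b^4*c*t^32 + 624*b^4*c*t^29 + 5610*b^4*c*t^26 + 34464*b^4*c*t^23 + 152544*b^4*c*t^20 + 481152*b^4*c*t^17 + 1057728*b^4*c*t^14 + 1574400*b^4*c*t^11 + 1509888*b^4*c*t^8 + 841728*b^4*c*t^5 + 207360*b^4*c*t^2 + 93*b^4*t^32 + 1722*b^4*t^29 + 18777*b^4*t^26 + 141744*b^4*t^23 + 726096*b^4*t^20 + 2497152*b^4*t^17 + 5757024*b^4*t^14 + 8788224*b^4*t^11 + 8537088*b^4*t^8 + 4787712*b^4*t^5 + 1181952*b^4*t^2 - 1*b^3*c^4*t^30 - 16*b^3*c^4*t^27 - 112*b^3*c^4*t^24 - 448*b^3*c^4*t^21 - 1120*b^3*c^4*t^18 - 1792*b^3*c^4*t^15 - 1792*b^3*c^4*t^12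 - 1024*b^3*c^4*t^9 - 256*b^3*c^4*t^6 + 1*b^3*c^3*t^33 + 18*b^3*c^3*t^30 + 171*b^3*c^3*t^27 + 1104*b^3*c^3*t^24 + 5040*b^3*c^3*t^21 + 16128*b^3*c^3*t^18 + 35616*b^3*c^3*t^15 + 52992*b^3*c^3*t^12 + 50688*b^3*c^3*t^9 + 28160*b^3*c^3*t^6 + 6912*b^3*c^3*t^3 + 6*b^3*c^2*t^33 + 112*b^3*c^2*t^30 + 1144*b^3*c^2*t^27 + 7936*b^3*c^2*t^24 + 38080*b^3*c^2*t^21 + 125440*b^3*c^2*t^18 + 281344*b^3*c^2*t^15 + 421888*b^3*c^2*t^12 + 404992*b^3*c^2*t^9 + 225280*b^3*c^2*t^6 + 55296*b^3*c^2*t^3 + 9*b^3*c*t^33 + 190*b^3*c*t^30 + 2743*b^3*c*t^27 + 25168*b^3*c*t^24 + 142576*b^3*c*t^21 + 515200*b^3*c*t^18 + 1217440*b^3*c*t^15 + 1881856*b^3*c*t^12 + 1839616*b^3*c*t^9 + 1034752*b^3*c*t^6 + 255744*b^3*c*t^3 + 14*b^3*t^33 + 342*b^3*t^30 + 7128*b^3*t^27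 + 78240*b^3*t^24 + 479808*b^3*t^21 + 1802304*b^3*t^18 + 4349184*b^3*t^15 + 6806016*b^3*t^12 + 6704640*b^3*t^9 + 3790336*b^3*t^6 + 940032*b^3*t^3 + 9*b^2*c^4*t^28 + 144*b^2*c^4*t^25 + 1008*b^2*c^4*t^22 + 4032*b^2*c^4*t^19 + 10080*b^2*c^4*t^16 + 16128*b^2*c^4*t^13 + 16128*b^2*c^4*t^10 + 9216*b^2*c^4*t^7 + 2304*b^2*c^4*t^4 + 3*b^2*c^3*t^31 + 102*b^2*c^3*t^28 + 1200*b^2*c^3*t^25 + 7392*b^2*c^3*t^22 + 27552*b^2*c^3*t^19 + 65856*b^2*c^3*t^16 + 102144*b^2*c^3*t^13 + 99840*b^2*c^3*t^10 + 56064*b^2*c^3*t^7 + 13824*b^2*c^3*t^4 + 6*b^2*c^2*t^31 + 285*b^2*c^2*t^28 + 3696*b^2*c^2*t^25 + 23856*b^2*c^2*t^22 + 91392*b^2*c^2*t^19 + 222432*b^2*c^2*t^16 + 349440*b^2*c^2*t^13 + 344832*b^2*c^2*t^10 + 195072*b^2*c^2*t^7 + 48384*b^2*c^2*t^4 + 9*b^2*c*t^31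 + 702*b^2*c*t^28 + 9936*b^2*c*t^25 + 66528*b^2*c*t^22 + 260064*b^2*c*t^19 + 641088*b^2*c*t^16 + 1016064*b^2*c*t^13 + 1009152*b^2*c*t^10 + 573696*b^2*c*t^7 + 142848*b^2*c*t^4 + 18*b^2*t^31 + 1827*b^2*t^28 + 26640*b^2*t^25 + 180432*b^2*t^22 + 709632*b^2*t^19 + 1755936*b^2*t^16 + 2790144*b^2*t^13 + 2776320*b^2*t^10 + 1580544*b^2*t^7 + 393984*b^2*t^4 + 3*b*c^5*t^29 + 48*b*c^5*t^26 + 336*b*c^5*t^23 + 1344*b*c^5*t^20 + 3360*b*c^5*t^17 + 5376*b*c^5*t^14 + 5376*b*c^5*t^11 + 3072*b*c^5*t^8 + 768*b*c^5*t^5 + 12*b*c^4*t^29 + 192*b*c^4*t^26 + 1344*b*c^4*t^23 + 5376*b*c^4*t^20 + 13440*b*c^4*t^17 + 21504*b*c^4*t^14 + 21504*b*c^4*t^11 + 12288*b*c^4*t^8 + 3072*b*c^4*t^5 + 27*b*c^3*t^29 + 432*b*c^3*t^26 + 3024*b*c^3*t^23 + 12096*b*c^3*t^20 + 30240*b*c^3*t^17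 + 48384*b*c^3*t^14 + 48384*b*c^3*t^11 + 27648*b*c^3*t^8 + 6912*b*c^3*t^5 + 60*b*c^2*t^29 + 960*b*c^2*t^26 + 6720*b*c^2*t^23 + 26880*b*c^2*t^20 + 67200*b*c^2*t^17 + 107520*b*c^2*t^14 + 107520*b*c^2*t^11 + 61440*b*c^2*t^8 + 15360*b*c^2*t^5 + 141*b*c*t^29 + 2256*b*c*t^26 + 15792*b*c*t^23 + 63168*b*c*t^20 + 157920*b*c*t^17 + 252672*b*c*t^14 + 252672*b*c*t^11 + 144384*b*c*t^8 + 36096*b*c*t^5 + 324*b*t^29 + 5184*b*t^26 + 36288*b*t^23 + 145152*b*t^20 + 362880*b*t^17 + 580608*b*t^14 + 580608*b*t^11 + 331776*b*t^8 + 82944*b*t^5 + 1*c^6*t^30 + 16*c^6*t^27 + 112*c^6*t^24 + 448*c^6*t^21 + 1120*c^6*t^18 + 1792*c^6*t^15 + 1792*c^6*t^12 + 1024*c^6*t^9 + 256*c^6*t^6 + 2*c^5*t^30 + 32*c^5*t^27 + 224*c^5*t^24 + 896*c^5*t^21 + 2240*c^5*t^18 + 3584*c^5*t^15 + 3584*c^5*t^12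 + 2048*c^5*t^9 + 512*c^5*t^6 + 1*c^4*t^30 + 16*c^4*t^27 + 112*c^4*t^24 + 448*c^4*t^21 + 1120*c^4*t^18 + 1792*c^4*t^15 + 1792*c^4*t^12 + 1024*c^4*t^9 + 256*c^4*t^6 + 2*c^3*t^30 + 32*c^3*t^27 + 224*c^3*t^24 + 896*c^3*t^21 + 2240*c^3*t^18 + 3584*c^3*t^15 + 3584*c^3*t^12 + 2048*c^3*t^9 + 512*c^3*t^6 + 7*c^2*t^30 + 112*c^2*t^27 + 784*c^2*t^24 + 3136*c^2*t^21 + 7840*c^2*t^18 + 12544*c^2*t^15 + 12544*c^2*t^12 + 7168*c^2*t^9 + 1792*c^2*t^6 + 14*c*t^30 + 224*c*t^27 + 1568*c*t^24 + 6272*c*t^21 + 15680*c*t^18 + 25088*c*t^15 + 25088*c*t^12 + 14336*c*t^9 + 3584*c*t^6 + 27*t^30 + 432*t^27 + 3024*t^24 + 12096*t^21 + 30240*t^18 + 48384*t^15 + 48384*t^12 + 27648*t^9 + 6912*t^6) * hC - (-18*b^7*t^29 - 288*b^7*t^26 - 2259*b^7*t^23 - 11466*b^7*t^20 - 40572*b^7*t^17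 - 100296*b^7*t^14 - 168336*b^7*t^11 - 181728*b^7*t^8 - 113472*b^7*t^5 - 31104*b^7*t^2 + 3*b^6*t^33 + 24*b^6*t^30 + 159*b^6*t^27 + 1068*b^6*t^24 + 5622*b^6*t^21 + 29166*b^6*t^18 + 140496*b^6*t^15 + 478248*b^6*t^12 + 1025376*b^6*t^9 + 1318944*b^6*t^6 + 933120*b^6*t^3 + 279936*b^6 + 4*b^5*t^34 + 68*b^5*t^31 + 1088*b^5*t^28 + 10205*b^5*t^25 + 64376*b^5*t^22 + 315866*b^5*t^19 + 1191806*b^5*t^16 + 3203636*b^5*t^13 + 5758640*b^5*t^10 + 6517312*b^5*t^7 + 4189536*b^5*t^4 + 1166400*b^5*t + 8*b^4*t^32 + 687*b^4*t^29 + 9064*b^4*t^26 + 76262*b^4*t^23 + 473676*b^4*t^20 + 2022526*b^4*t^17 + 5668358*b^4*t^14 + 10199520*b^4*t^11 + 11355280*b^4*t^8 + 7132320*b^4*t^5 + 1936224*b^4*t^2 + 220*b^3*t^30 + 3343*b^3*t^27 + 43188*b^3*t^24 + 355570*b^3*t^21 + 1706800*b^3*t^18 + 4965090*b^3*t^15 +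 8963062*b^3*t^12 + 9868852*b^3*t^9 + 6095112*b^3*t^6 + 1623888*b^3*t^3 + 29*b^2*t^31 + 476*b^2*t^28 + 15554*b^2*t^25 + 162552*b^2*t^22 + 821358*b^2*t^19 + 2385780*b^2*t^16 + 4231318*b^2*t^13 + 4557790*b^2*t^10 + 2754064*b^2*t^7 + 719064*b^2*t^4 + 7*b*t^29 + 4136*b*t^26 + 45006*b*t^23 + 217164*b*t^20 + 599034*b*t^17 + 1016664*b*t^14 + 1057466*b*t^11 + 621742*b*t^8 + 158868*b*t^5 + 722*t^27 + 6084*t^24 + 24474*t^21 + 60480*t^18 + 96486*t^15 + 96732*t^12 + 55438*t^9 + 13878*t^6) * hP)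
    rcases mul_eq_zero.mp ((mul_eq_zero.mp h).resolve_left (pow_ne_zero 7 ht0)) with h | h
    · rcases mul_eq_zero.mp h with h | h
      · exact finT1 h
      · exact finT2 (pow_eq_zero_iff (three_ne_zero) |>.mp h)
    · exact absurd h (noRatRoot (t^3))
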